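/- Single crossing for CARA with respect to the risk-aversion parameter: for two insurance contracts with deductibles d₁ > d₂ ≥ 0 and premiums x₁ < x₂ satisfying x₂ - x₁ < d₁ - d₂ and x₂ - x₁ > μ(d₁ - d₂) for μ ∈ (0,1), the function Δ(ν) = CE_ν(contract 2) - CE_ν(contract 1) is continuous and strictly increasing in ν on (0,∞), is negative as ν → 0⁺ and positive as ν → ∞, hence has a unique zero ν* > 0; the agent strictly prefers contract 2 (lower deductible) iff ν > ν*. -/

import Mathlib

open Real Filter Set

private lemma myA_pos {μ : ℝ} (hμ0 : 0 < μ) (hμ1 : μ < 1) (t : ℝ) :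
    0 < (1 - μ) + μ * Real.exp t :=
  add_pos (by linarith) (mul_pos hμ0 (Real.exp_pos t))

private lemma myK_deriv {μ : ℝ} (hμ0 : 0 < μ) (hμ1 : μ < 1) (t : ℝ) :
    HasDerivAt (fun t => Real.log ((1 - μ) + μ * Real.exp t))
      (μ * Real.exp t / ((1 - μ) + μ * Real.exp t)) t := by
  have h1 : HasDerivAt (fun t => (1 - μ) + μ * Real.exp t) (μ * Real.exp t) t :=
    ((Real.hasDerivAt_exp t).const_mul μ).const_add (1 - μ)
  exact h1.log (myA_pos hμ0 hμ1 t).ne'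

private lemma myL_deriv {μ : ℝ} (hμ0 : 0 < μ) (hμ1 : μ < 1) (t : ℝ) :
    HasDerivAt (fun t => t * (μ * Real.exp t / ((1 - μ) + μ * Real.exp t))
        - Real.log ((1 - μ) + μ * Real.exp t))
      (t * (μ * (1 - μ) * Real.exp t / ((1 - μ) + μ * Real.exp t) ^ 2)) t := by
  have hA := (myA_pos hμ0 hμ1 t).ne'
  have h1 : HasDerivAt (fun t => (1 - μ) + μ * Real.exp t) (μ * Real.exp t) t :=
    ((Real.hasDerivAt_exp t).const_mul μ).const_add (1 - μ)
  have hnum : HasDerivAt (fun t => μ * Real.exp t) (μ * Real.exp t) t :=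
    (Real.hasDerivAt_exp t).const_mul μ
  have hq : HasDerivAt (fun t => μ * Real.exp t / ((1 - μ) + μ * Real.exp t))
      ((μ * Real.exp t * ((1 - μ) + μ * Real.exp t) - μ * Real.exp t * (μ * Real.exp t))
        / ((1 - μ) + μ * Real.exp t) ^ 2) t := hnum.div h1 hA
  have hprod := (hasDerivAt_id t).mul hq
  have := hprod.sub (myK_deriv hμ0 hμ1 t)
  refine this.congr_deriv ?_
  simp only [id]
  field_simp
  ring

private lemma myL_mono {μ : ℝ} (hμ0 : 0 < μ) (hμ1 : μ < 1) :
    StrictMonoOn (fun t => t * (μ * Real.exp t / ((1 - μ) + μ * Real.exp t))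
        - Real.log ((1 - μ) + μ * Real.exp t)) (Set.Ici 0) := by
  apply strictMonoOn_of_deriv_pos (convex_Ici 0)
  · exact fun t _ => (myL_deriv hμ0 hμ1 t).continuousAt.continuousWithinAt
  · intro t ht
    rw [interior_Ici] at ht
    rw [(myL_deriv hμ0 hμ1 t).deriv]
    have hA := myA_pos hμ0 hμ1 t
    have h : 0 < μ * (1 - μ) * Real.exp t / ((1 - μ) + μ * Real.exp t) ^ 2 := by
      apply div_pos (mul_pos (mul_pos hμ0 (by linarith)) (Real.exp_pos t))
      positivity
    exact mul_pos ht h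

private lemma myDelta_deriv {μ : ℝ} (hμ0 : 0 < μ) (hμ1 : μ < 1)
    (d₁ d₂ x₁ x₂ ν : ℝ) (hν : 0 < ν) :
    HasDerivAt (fun ν => (-x₂ - (1 / ν) * Real.log ((1 - μ) + μ * Real.exp (ν * d₂)))
        - (-x₁ - (1 / ν) * Real.log ((1 - μ) + μ * Real.exp (ν * d₁))))
      ((ν ^ 2)⁻¹ *
        ((ν * d₁ * (μ * Real.exp (ν * d₁) / ((1 - μ) + μ * Real.exp (ν * d₁)))
            - Real.log ((1 - μ) + μ * Real.exp (ν * d₁)))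
          - (ν * d₂ * (μ * Real.exp (ν * d₂) / ((1 - μ) + μ * Real.exp (ν * d₂)))
            - Real.log ((1 - μ) + μ * Real.exp (ν * d₂))))) ν := by
  have hν0 : ν ≠ 0 := hν.ne'
  have hinv : HasDerivAt (fun ν : ℝ => 1 / ν) (-(ν ^ 2)⁻¹) ν := by
    simpa [one_div] using hasDerivAt_inv hν0
  have hK1 : HasDerivAt (fun ν => Real.log ((1 - μ) + μ * Real.exp (ν * d₁)))
      (μ * Real.exp (ν * d₁) / ((1 - μ) + μ * Real.exp (ν * d₁)) * d₁) ν :=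
    by have := (myK_deriv hμ0 hμ1 (ν * d₁)).comp ν (hasDerivAt_mul_const d₁); exact this
  have hK2 : HasDerivAt (fun ν => Real.log ((1 - μ) + μ * Real.exp (ν * d₂)))
      (μ * Real.exp (ν * d₂) / ((1 - μ) + μ * Real.exp (ν * d₂)) * d₂) ν :=
    by have := (myK_deriv hμ0 hμ1 (ν * d₂)).comp ν (hasDerivAt_mul_const d₂); exact this
  have h2 := (hasDerivAt_const ν (-x₂)).sub (hinv.mul hK2)
  have h1 := (hasDerivAt_const ν (-x₁)).sub (hinv.mul hK1)
  have hA1 := (myA_pos hμ0 hμ1 (ν * d₁)).ne'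
  have hA2 := (myA_pos hμ0 hμ1 (ν * d₂)).ne'
  refine (h2.sub h1).congr_deriv ?_
  field_simp
  ring

theorem cara_single_crossing (μ d₁ d₂ x₁ x₂ : ℝ) (hμ0 : 0 < μ) (hμ1 : μ < 1)
    (hd2 : 0 ≤ d₂) (hd : d₂ < d₁) (hx1 : 0 ≤ x₁) (hx : x₁ < x₂)
    (hndom : x₂ - x₁ < d₁ - d₂) (hunfav : μ * (d₁ - d₂) < x₂ - x₁) :
    let CE : ℝ → ℝ → ℝ → ℝ := fun ν d x =>
      -x - (1 / ν) * Real.log ((1 - μ) + μ * Real.exp (ν * d))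
    let Δ : ℝ → ℝ := fun ν => CE ν d₂ x₂ - CE ν d₁ x₁
    ContinuousOn Δ (Set.Ioi 0) ∧ StrictMonoOn Δ (Set.Ioi 0) ∧
    (∀ᶠ ν in nhdsWithin 0 (Set.Ioi 0), Δ ν < 0) ∧
    (∀ᶠ ν in Filter.atTop, 0 < Δ ν) ∧
    (∃! νstar : ℝ, νstar ∈ Set.Ioi (0:ℝ) ∧ Δ νstar = 0 ∧
      ∀ ν ∈ Set.Ioi (0:ℝ), (0 < Δ ν ↔ νstar < ν)) := by
  intro CE Δ
  have hΔeq : Δ = fun ν =>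
      (-x₂ - (1 / ν) * Real.log ((1 - μ) + μ * Real.exp (ν * d₂)))
        - (-x₁ - (1 / ν) * Real.log ((1 - μ) + μ * Real.exp (ν * d₁))) := rfl
  rw [hΔeq]
  set D : ℝ → ℝ := fun ν =>
      (-x₂ - (1 / ν) * Real.log ((1 - μ) + μ * Real.exp (ν * d₂)))
        - (-x₁ - (1 / ν) * Real.log ((1 - μ) + μ * Real.exp (ν * d₁))) with hD
  -- derivative
  have hder : ∀ ν ∈ Set.Ioi (0:ℝ), HasDerivAt D
      ((ν ^ 2)⁻¹ *
        ((ν * d₁ * (μ * Real.exp (ν * d₁) / ((1 - μ) + μ * Real.exp (ν * d₁)))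
            - Real.log ((1 - μ) + μ * Real.exp (ν * d₁)))
          - (ν * d₂ * (μ * Real.exp (ν * d₂) / ((1 - μ) + μ * Real.exp (ν * d₂)))
            - Real.log ((1 - μ) + μ * Real.exp (ν * d₂))))) ν :=
    fun ν hν => myDelta_deriv hμ0 hμ1 d₁ d₂ x₁ x₂ ν hν
  have hcont : ContinuousOn D (Set.Ioi 0) :=
    fun ν hν => (hder ν hν).continuousAt.continuousWithinAt
  have hmono : StrictMonoOn D (Set.Ioi 0) := by
    apply strictMonoOn_of_deriv_pos (convex_Ioi 0) hcont
    intro ν hν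
    rw [interior_Ioi] at hν
    have hν' : (0:ℝ) < ν := hν
    rw [(hder ν hν).deriv]
    apply mul_pos (by positivity)
    have h12 : ν * d₂ < ν * d₁ := by nlinarith
    have := myL_mono hμ0 hμ1 (mem_Ici.2 (mul_nonneg hν.le hd2))
      (mem_Ici.2 (le_of_lt (lt_of_le_of_lt (mul_nonneg hν.le hd2) h12))) h12
    simpa using sub_pos.2 this
  -- limit at 0⁺
  have hF : HasDerivAt (fun ν => Real.log ((1 - μ) + μ * Real.exp (ν * d₁))
      - Real.log ((1 - μ) + μ * Real.exp (ν * d₂))) (μ * d₁ - μ * d₂) 0 := by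
    have h1 : HasDerivAt (fun ν => Real.log ((1 - μ) + μ * Real.exp (ν * d₁)))
        (μ * Real.exp ((0:ℝ) * d₁) / ((1 - μ) + μ * Real.exp ((0:ℝ) * d₁)) * d₁) 0 :=
      by have := (myK_deriv hμ0 hμ1 ((0:ℝ) * d₁)).comp 0 (hasDerivAt_mul_const d₁); exact this
    have h2 : HasDerivAt (fun ν => Real.log ((1 - μ) + μ * Real.exp (ν * d₂)))
        (μ * Real.exp ((0:ℝ) * d₂) / ((1 - μ) + μ * Real.exp ((0:ℝ) * d₂)) * d₂) 0 :=
      by have := (myK_deriv hμ0 hμ1 ((0:ℝ) * d₂)).comp 0 (hasDerivAt_mul_const d₂); exact this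
    have := h1.sub h2
    refine this.congr_deriv ?_
    norm_num [Real.exp_zero]
  have hslope := hasDerivAt_iff_tendsto_slope.mp hF
  have hmono0 : nhdsWithin (0:ℝ) (Set.Ioi 0) ≤ nhdsWithin 0 {(0:ℝ)}ᶜ :=
    nhdsWithin_mono 0 (fun x hx => ne_of_gt hx)
  have htends : Tendsto D (nhdsWithin 0 (Set.Ioi 0))
      (nhds ((x₁ - x₂) + (μ * d₁ - μ * d₂))) := by
    have h := Filter.Tendsto.const_add (x₁ - x₂) (hslope.mono_left hmono0)
    apply h.congr'
    filter_upwards [self_mem_nhdsWithin] with ν (hν : (0:ℝ) < ν)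
    have hν0 : ν ≠ 0 := hν.ne'
    simp only [hD, slope_def_field, div_eq_inv_mul]
    norm_num [Real.exp_zero]
    field_simp
    ring
  have hneg : ∀ᶠ ν in nhdsWithin 0 (Set.Ioi 0), D ν < 0 :=
    htends.eventually_lt_const (by nlinarith)
  -- positivity at infinity
  have hc : 0 < (d₁ - d₂) - (x₂ - x₁) := by linarith
  have hpos : ∀ᶠ ν in Filter.atTop, 0 < D ν := by
    filter_upwards [eventually_gt_atTop
      (max 0 ((-Real.log μ) / ((d₁ - d₂) - (x₂ - x₁))))] with ν hν
    have hν0 : 0 < ν := lt_of_le_of_lt (le_max_left _ _) hν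
    have h1 : Real.log μ + ν * d₁ ≤ Real.log ((1 - μ) + μ * Real.exp (ν * d₁)) := by
      have hle : μ * Real.exp (ν * d₁) ≤ (1 - μ) + μ * Real.exp (ν * d₁) := by linarith
      calc Real.log μ + ν * d₁ = Real.log (μ * Real.exp (ν * d₁)) := by
            rw [Real.log_mul hμ0.ne' (Real.exp_ne_zero _), Real.log_exp]
        _ ≤ _ := Real.log_le_log (mul_pos hμ0 (Real.exp_pos _)) hle
    have h2 : Real.log ((1 - μ) + μ * Real.exp (ν * d₂)) ≤ ν * d₂ := by
      have he : (1:ℝ) ≤ Real.exp (ν * d₂) := Real.one_le_exp (mul_nonneg hν0.le hd2)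
      have hub : (1 - μ) + μ * Real.exp (ν * d₂) ≤ Real.exp (ν * d₂) := by nlinarith
      calc Real.log ((1 - μ) + μ * Real.exp (ν * d₂))
            ≤ Real.log (Real.exp (ν * d₂)) :=
              Real.log_le_log (myA_pos hμ0 hμ1 _) hub
        _ = ν * d₂ := Real.log_exp _
    have hν1 : (-Real.log μ) / ((d₁ - d₂) - (x₂ - x₁)) < ν :=
      lt_of_le_of_lt (le_max_right _ _) hν
    have hkey : -Real.log μ < ν * ((d₁ - d₂) - (x₂ - x₁)) := (div_lt_iff₀ hc).mp hν1
    have hinv : (0:ℝ) < 1 / ν := by positivity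
    have m1 := mul_le_mul_of_nonneg_left h1 hinv.le
    have m2 := mul_le_mul_of_nonneg_left h2 hinv.le
    have hsplit : x₁ - x₂ + (1 / ν) * ((Real.log μ + ν * d₁) - ν * d₂) =
        (x₁ - x₂ + (d₁ - d₂)) + Real.log μ / ν := by
      field_simp
      ring
    have hlast : -((d₁ - d₂) - (x₂ - x₁)) < Real.log μ / ν := by
      rw [neg_lt, ← neg_div, div_lt_iff₀ hν0]
      linarith [hkey]
    have hgoal : 0 < x₁ - x₂ + (1 / ν) * ((Real.log μ + ν * d₁) - ν * d₂) := by
      rw [hsplit]; linarith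
    show (0:ℝ) < D ν
    rw [hD]
    simp only
    nlinarith [m1, m2, hgoal]
  refine ⟨hcont, hmono, hneg, hpos, ?_⟩
  -- existence and uniqueness of the crossing point
  obtain ⟨a, haneg, ha0⟩ := (hneg.and self_mem_nhdsWithin).exists
  obtain ⟨b, hbpos, hab⟩ := (hpos.and (eventually_gt_atTop a)).exists
  have ha0' : (0:ℝ) < a := ha0
  have hsub : Set.Icc a b ⊆ Set.Ioi 0 := fun x hx => lt_of_lt_of_le ha0' hx.1
  obtain ⟨c, hcmem, hfc⟩ := intermediate_value_Icc hab.le (hcont.mono hsub)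
    ⟨haneg.le, hbpos.le⟩
  have hc0 : c ∈ Set.Ioi (0:ℝ) := hsub hcmem
  refine ⟨c, ⟨hc0, hfc, ?_⟩, ?_⟩
  · intro ν hν
    constructor
    · intro h
      by_contra hle
      push_neg at hle
      rcases eq_or_lt_of_le hle with h' | h'
      · rw [h', hfc] at h; exact lt_irrefl 0 h
      · have := hmono hν hc0 h'
        rw [hfc] at this; linarith
    · intro h
      have := hmono hc0 hν h
      rwa [hfc] at this
  · rintro y ⟨hy0, hfy, -⟩
    exact hmono.injOn hy0 hc0 (hfy.trans hfc.symm)
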